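/- Let n ≥ 3 and let a, c, t ∈ ℂ with c ≠ 0 and a ≠ 1. Put M = [[a, (1−a)/c],[c, 0]] and N = [[1−(1−a)(1−t), ((1−a)/c)(1−t)],[c(1−t), t]], and for 1 ≤ i ≤ n−1 set σᵢ = Lᵢ(M) and τᵢ = Lᵢ(N) in Mₙ(ℂ). Then all defining relations of SMₙ hold: σᵢσⱼ = σⱼσᵢ whenever |i−j| ≥ 2; σᵢσ_{i+1}σᵢ = σ_{i+1}σᵢσ_{i+1} for 1 ≤ i ≤ n−2; τᵢτⱼ = τⱼτᵢ and τᵢσⱼ = σⱼτᵢ whenever |i−j| ≥ 2; σᵢτᵢ = τᵢσᵢ for 1 ≤ i ≤ n−1; and σᵢσ_{i+1}τᵢ = τ_{i+1}σᵢσ_{i+1} and σ_{i+1}σᵢτ_{i+1} = τᵢσ_{i+1}σᵢ for 1 ≤ i ≤ n−2. -/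

import Mathlib

open Matrix

noncomputable def emb {n m : ℕ} (e : Fin m → Fin n) (A : Matrix (Fin m) (Fin m) ℂ) :
    Matrix (Fin n) (Fin n) ℂ :=
  ∑ p : Fin m, ∑ q : Fin m, Matrix.single (e p) (e q) (A p q)

lemma emb_add {n m : ℕ} (e : Fin m → Fin n) (A B : Matrix (Fin m) (Fin m) ℂ) :
    emb e (A + B) = emb e A + emb e B := by
  simp [emb, Matrix.single_add, Finset.sum_add_distrib]

lemma stdBasisMatrix_sum {n : ℕ} (i j : Fin n) {m : ℕ} (f : Fin m → ℂ) :
    Matrix.single i j (∑ x, f x) = ∑ x, Matrix.single i j (f x) := by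
  ext a b
  simp only [Matrix.single, Matrix.of_apply, Matrix.sum_apply]
  split_ifs <;> simp

lemma sum_ite_const {α : Type*} [AddCommMonoid α] {m : ℕ} (c : Prop) [Decidable c]
    (g : Fin m → α) : (∑ q' : Fin m, if c then g q' else 0) = if c then ∑ q' : Fin m, g q' else 0 := by
  split_ifs <;> simp

lemma emb_mul {n m : ℕ} (e : Fin m → Fin n) (he : Function.Injective e)
    (A B : Matrix (Fin m) (Fin m) ℂ) : emb e A * emb e B = emb e (A * B) := by
  have key : ∀ (p q p' q' : Fin m),
      Matrix.single (e p) (e q) (A p q) * Matrix.single (e p') (e q') (B p' q')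
        = if q = p' then Matrix.single (e p) (e q') (A p q * B q q') else 0 := by
    intro p q p' q'
    by_cases h : q = p'
    · subst h; simp [Matrix.single_mul_single_same]
    · rw [if_neg h]
      exact Matrix.single_mul_single_of_ne (c := A p q) (e p) (e q) (e p')
        (fun hh => h (he hh)) (B p' q')
  unfold emb
  rw [Finset.sum_mul]
  refine Finset.sum_congr rfl fun p _ => ?_
  rw [Finset.sum_mul]
  simp_rw [Finset.mul_sum, key, sum_ite_const, Finset.sum_ite_eq, Finset.mem_univ, if_true]
  rw [Finset.sum_comm]
  refine Finset.sum_congr rfl fun q' _ => ?_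
  rw [Matrix.mul_apply, stdBasisMatrix_sum]

lemma emb_mul_disjoint {n m m' : ℕ} (e : Fin m → Fin n) (f : Fin m' → Fin n)
    (h : ∀ p q, e p ≠ f q) (A : Matrix (Fin m) (Fin m) ℂ) (B : Matrix (Fin m') (Fin m') ℂ) :
    emb e A * emb f B = 0 := by
  unfold emb
  rw [Finset.sum_mul]
  refine Finset.sum_eq_zero fun p _ => ?_
  rw [Finset.sum_mul]
  refine Finset.sum_eq_zero fun q _ => ?_
  rw [Finset.mul_sum]
  refine Finset.sum_eq_zero fun p' _ => ?_
  rw [Finset.mul_sum]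
  refine Finset.sum_eq_zero fun q' _ => ?_
  exact Matrix.single_mul_single_of_ne (c := A p q) (e p) (e q) (f p')
    (h q p') (B p' q')

def loc2 (n i : ℕ) (P : Matrix (Fin 2) (Fin 2) ℂ) : Matrix (Fin n) (Fin n) ℂ :=
  Matrix.of fun r s =>
    if (r : ℕ) = i - 1 ∧ (s : ℕ) = i - 1 then P 0 0
    else if (r : ℕ) = i - 1 ∧ (s : ℕ) = i then P 0 1
    else if (r : ℕ) = i ∧ (s : ℕ) = i - 1 then P 1 0
    else if (r : ℕ) = i ∧ (s : ℕ) = i then P 1 1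
    else if r = s then 1 else 0

lemma loc2_eq {n i : ℕ} (h1 : 1 ≤ i) (h2 : i < n) (P : Matrix (Fin 2) (Fin 2) ℂ) :
    loc2 n i P = 1 + emb (fun p : Fin 2 => (⟨i - 1 + p, by have := p.2; omega⟩ : Fin n)) (P - 1) := by
  ext ⟨r, hr⟩ ⟨s, hs⟩
  simp only [loc2, emb, Fin.sum_univ_two, Matrix.sum_apply, Matrix.of_apply, Matrix.add_apply,
    Matrix.one_apply, Matrix.sub_apply, Matrix.single, Fin.mk.injEq, Fin.isValue,
    Fin.val_zero, Fin.val_one, add_zero, Nat.sub_add_cancel h1,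
    @eq_comm ℕ (i - 1), @eq_comm ℕ i]
  norm_num
  split_ifs <;> first | ring1 | (exfalso; omega)

noncomputable def up2 (P : Matrix (Fin 2) (Fin 2) ℂ) : Matrix (Fin 3) (Fin 3) ℂ :=
  !![P 0 0, P 0 1, 0; P 1 0, P 1 1, 0; 0, 0, 1]

noncomputable def dn2 (P : Matrix (Fin 2) (Fin 2) ℂ) : Matrix (Fin 3) (Fin 3) ℂ :=
  !![1, 0, 0; 0, P 0 0, P 0 1; 0, P 1 0, P 1 1]

lemma emb_up {n i : ℕ} (h1 : 1 ≤ i) (h2 : i + 1 < n) (P : Matrix (Fin 2) (Fin 2) ℂ) :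
    emb (fun p : Fin 3 => (⟨i - 1 + p, by have := p.2; omega⟩ : Fin n)) (up2 P - 1)
      = emb (fun p : Fin 2 => (⟨i - 1 + p, by have := p.2; omega⟩ : Fin n)) (P - 1) := by
  have key2 : i - 1 + 2 = i + 1 := by omega
  simp [emb, up2, Fin.sum_univ_three, Fin.sum_univ_two, Matrix.sub_apply, Matrix.one_apply,
    key2, Nat.sub_add_cancel h1, Matrix.vecHead, Matrix.vecTail, Function.comp]

lemma emb_dn {n i : ℕ} (h1 : 1 ≤ i) (h2 : i + 1 < n) (P : Matrix (Fin 2) (Fin 2) ℂ) :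
    emb (fun p : Fin 3 => (⟨i - 1 + p, by have := p.2; omega⟩ : Fin n)) (dn2 P - 1)
      = emb (fun p : Fin 2 => (⟨i + 1 - 1 + p, by have := p.2; omega⟩ : Fin n)) (P - 1) := by
  have key2 : i - 1 + 2 = i + 1 := by omega
  simp [emb, dn2, Fin.sum_univ_three, Fin.sum_univ_two, Matrix.sub_apply, Matrix.one_apply,
    key2, Nat.sub_add_cancel h1, Nat.add_sub_cancel, Matrix.vecHead, Matrix.vecTail, Function.comp]

lemma lift_mul {n m : ℕ} (e : Fin m → Fin n) (he : Function.Injective e)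
    (A B : Matrix (Fin m) (Fin m) ℂ) :
    (1 + emb e (A - 1)) * (1 + emb e (B - 1)) = 1 + emb e (A * B - 1) := by
  have h1 : (1 + emb e (A - 1)) * (1 + emb e (B - 1))
      = 1 + (emb e (A - 1) + emb e (B - 1) + emb e (A - 1) * emb e (B - 1)) := by noncomm_ring
  rw [h1, emb_mul e he, ← emb_add, ← emb_add]
  congr 2
  noncomm_ring

lemma lift_comm {n m m' : ℕ} (e : Fin m → Fin n) (f : Fin m' → Fin n)
    (hef : ∀ p q, e p ≠ f q) (A : Matrix (Fin m) (Fin m) ℂ) (B : Matrix (Fin m') (Fin m') ℂ) :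
    (1 + emb e A) * (1 + emb f B) = (1 + emb f B) * (1 + emb e A) := by
  have expand : ∀ X Y : Matrix (Fin n) (Fin n) ℂ, (1 + X) * (1 + Y) = 1 + X + Y + X * Y := by
    intro X Y; noncomm_ring
  rw [expand, expand, emb_mul_disjoint e f hef, emb_mul_disjoint f e (fun p q => (hef q p).symm)]
  abel

lemma inj2 {n i : ℕ} (h1 : 1 ≤ i) (h : i < n) : Function.Injective
    (fun p : Fin 2 => (⟨i - 1 + p, by have := p.2; omega⟩ : Fin n)) := by
  intro p q hpq
  have h2 := congrArg Fin.val hpq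
  simp only at h2
  have hp := p.2
  have hq := q.2
  exact Fin.ext (by omega)

lemma inj3 {n i : ℕ} (h1 : 1 ≤ i) (h : i + 1 < n) : Function.Injective
    (fun p : Fin 3 => (⟨i - 1 + p, by have := p.2; omega⟩ : Fin n)) := by
  intro p q hpq
  have h2 := congrArg Fin.val hpq
  simp only at h2
  have hp := p.2
  have hq := q.2
  exact Fin.ext (by omega)

lemma loc2_mul {n i : ℕ} (h1 : 1 ≤ i) (h2 : i < n) (P Q : Matrix (Fin 2) (Fin 2) ℂ) :
    loc2 n i P * loc2 n i Q
      = 1 + emb (fun p : Fin 2 => (⟨i - 1 + p, by have := p.2; omega⟩ : Fin n)) (P * Q - 1) := by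
  rw [loc2_eq h1 h2, loc2_eq h1 h2, lift_mul _ (inj2 h1 h2)]

lemma loc2_comm_same {n i : ℕ} (h1 : 1 ≤ i) (h2 : i < n) {P Q : Matrix (Fin 2) (Fin 2) ℂ}
    (hPQ : P * Q = Q * P) : loc2 n i P * loc2 n i Q = loc2 n i Q * loc2 n i P := by
  rw [loc2_mul h1 h2, loc2_mul h1 h2, hPQ]

lemma loc2_far {n i j : ℕ} (h1 : 1 ≤ i) (hij : i + 2 ≤ j) (hj : j < n)
    (P Q : Matrix (Fin 2) (Fin 2) ℂ) :
    loc2 n i P * loc2 n j Q = loc2 n j Q * loc2 n i P := by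
  have hi : i < n := by omega
  have hj1 : 1 ≤ j := by omega
  rw [loc2_eq h1 hi, loc2_eq hj1 hj]
  refine lift_comm _ _ (fun p q => ?_) _ _
  have hp := p.2
  have hq := q.2
  simp only [ne_eq, Fin.mk.injEq]
  omega

lemma loc2_tri_lo {n i : ℕ} (h1 : 1 ≤ i) (h2 : i + 1 < n) (P Q R : Matrix (Fin 2) (Fin 2) ℂ) :
    loc2 n i P * loc2 n (i + 1) Q * loc2 n i R
      = 1 + emb (fun p : Fin 3 => (⟨i - 1 + p, by have := p.2; omega⟩ : Fin n))
          (up2 P * dn2 Q * up2 R - 1) := by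
  have hi : i < n := by omega
  have hi1 : 1 ≤ i + 1 := by omega
  rw [loc2_eq h1 hi P, loc2_eq hi1 h2 Q, loc2_eq h1 hi R,
    ← emb_up h1 h2 P, ← emb_dn h1 h2 Q, ← emb_up h1 h2 R,
    lift_mul _ (inj3 h1 h2), lift_mul _ (inj3 h1 h2)]

lemma loc2_tri_hi {n i : ℕ} (h1 : 1 ≤ i) (h2 : i + 1 < n) (P Q R : Matrix (Fin 2) (Fin 2) ℂ) :
    loc2 n (i + 1) P * loc2 n i Q * loc2 n (i + 1) R
      = 1 + emb (fun p : Fin 3 => (⟨i - 1 + p, by have := p.2; omega⟩ : Fin n))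
          (dn2 P * up2 Q * dn2 R - 1) := by
  have hi : i < n := by omega
  have hi1 : 1 ≤ i + 1 := by omega
  rw [loc2_eq hi1 h2 P, loc2_eq h1 hi Q, loc2_eq hi1 h2 R,
    ← emb_dn h1 h2 P, ← emb_up h1 h2 Q, ← emb_dn h1 h2 R,
    lift_mul _ (inj3 h1 h2), lift_mul _ (inj3 h1 h2)]

set_option maxHeartbeats 1000000 in
theorem stmt18 (n : ℕ) (hn : 3 ≤ n) (a c t : ℂ) (hc : c ≠ 0) (ha : a ≠ 1)
    (M N : Matrix (Fin 2) (Fin 2) ℂ)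
    (hM : M = !![a, (1 - a) / c; c, 0])
    (hN : N = !![1 - (1 - a) * (1 - t), ((1 - a) / c) * (1 - t); c * (1 - t), t]) :
    (∀ i j : ℕ, 1 ≤ i → i ≤ n - 1 → 1 ≤ j → j ≤ n - 1 → (i + 2 ≤ j ∨ j + 2 ≤ i) →
        loc2 n i M * loc2 n j M = loc2 n j M * loc2 n i M) ∧
    (∀ i : ℕ, 1 ≤ i → i ≤ n - 2 →
        loc2 n i M * loc2 n (i + 1) M * loc2 n i M
          = loc2 n (i + 1) M * loc2 n i M * loc2 n (i + 1) M) ∧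
    (∀ i j : ℕ, 1 ≤ i → i ≤ n - 1 → 1 ≤ j → j ≤ n - 1 → (i + 2 ≤ j ∨ j + 2 ≤ i) →
        loc2 n i N * loc2 n j N = loc2 n j N * loc2 n i N) ∧
    (∀ i j : ℕ, 1 ≤ i → i ≤ n - 1 → 1 ≤ j → j ≤ n - 1 → (i + 2 ≤ j ∨ j + 2 ≤ i) →
        loc2 n i N * loc2 n j M = loc2 n j M * loc2 n i N) ∧
    (∀ i : ℕ, 1 ≤ i → i ≤ n - 1 →
        loc2 n i M * loc2 n i N = loc2 n i N * loc2 n i M) ∧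
    (∀ i : ℕ, 1 ≤ i → i ≤ n - 2 →
        loc2 n i M * loc2 n (i + 1) M * loc2 n i N
          = loc2 n (i + 1) N * loc2 n i M * loc2 n (i + 1) M) ∧
    (∀ i : ℕ, 1 ≤ i → i ≤ n - 2 →
        loc2 n (i + 1) M * loc2 n i M * loc2 n (i + 1) N
          = loc2 n i N * loc2 n (i + 1) M * loc2 n i M) := by
  have hMN : M * N = N * M := by
    subst hM hN
    ext p q
    fin_cases p <;> fin_cases q <;>
      (try simp [Matrix.mul_apply, Fin.sum_univ_two, Matrix.vecHead, Matrix.vecTail]) <;>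
      (try field_simp) <;> (try ring1)
  have hb1 : up2 M * dn2 M * up2 M = dn2 M * up2 M * dn2 M := by
    subst hM
    ext p q
    fin_cases p <;> fin_cases q <;>
      (try simp [up2, dn2, Matrix.mul_apply, Fin.sum_univ_three, Matrix.vecHead,
        Matrix.vecTail]) <;> (try field_simp) <;> (try ring1)
  have hb2 : up2 M * dn2 M * up2 N = dn2 N * up2 M * dn2 M := by
    subst hM hN
    ext p q
    fin_cases p <;> fin_cases q <;>
      (try simp [up2, dn2, Matrix.mul_apply, Fin.sum_univ_three, Matrix.vecHead,
        Matrix.vecTail]) <;> (try field_simp) <;> (try ring1)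
  have hb3 : dn2 M * up2 M * dn2 N = up2 N * dn2 M * up2 M := by
    subst hM hN
    ext p q
    fin_cases p <;> fin_cases q <;>
      (try simp [up2, dn2, Matrix.mul_apply, Fin.sum_univ_three, Matrix.vecHead,
        Matrix.vecTail]) <;> (try field_simp) <;> (try ring1)
  refine ⟨?_, ?_, ?_, ?_, ?_, ?_, ?_⟩
  · intro i j hi hin hj hjn hij
    rcases hij with h | h
    · exact loc2_far hi h (by omega) M M
    · exact (loc2_far hj h (by omega) M M).symm
  · intro i hi hin
    have h2 : i + 1 < n := by omega
    rw [loc2_tri_lo hi h2, loc2_tri_hi hi h2, hb1]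
  · intro i j hi hin hj hjn hij
    rcases hij with h | h
    · exact loc2_far hi h (by omega) N N
    · exact (loc2_far hj h (by omega) N N).symm
  · intro i j hi hin hj hjn hij
    rcases hij with h | h
    · exact loc2_far hi h (by omega) N M
    · exact (loc2_far hj h (by omega) M N).symm
  · intro i hi hin
    exact loc2_comm_same hi (by omega) hMN
  · intro i hi hin
    have h2 : i + 1 < n := by omega
    rw [loc2_tri_lo hi h2, loc2_tri_hi hi h2, hb2]
  · intro i hi hin
    have h2 : i + 1 < n := by omega
    rw [loc2_tri_hi hi h2, loc2_tri_lo hi h2, hb3]
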